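/- arXiv:2005.11790 — 3 statements merged into one kernel-verified Lean document; each statement's English description precedes it below -/
import Mathlib

section
/- Let t > 0, let E ⊂ ℝⁿ be a Borel set, and let P : ℝⁿ → ℝᵐ be an orthogonal projection. If H^t(E ∩ P⁻¹{u}) = 0 for every u ∈ ℝᵐ, then for every μ ∈ M(E), for μ-almost all x ∈ E one has limsup_{r→0} liminf_{δ→0} r^{-t} δ^{-m} μ({y ∈ E ∩ B(x,r) : |P(y − x)| ≤ δ}) = ∞. -/
open MeasureTheory Metric Filter ProbabilityTheory
open scoped ProbabilityTheory
open scoped ENNReal Topology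

noncomputable section

def IsOrthoProj {E F : Type*} [NormedAddCommGroup E] [InnerProductSpace ℝ E]
    [NormedAddCommGroup F] [InnerProductSpace ℝ F] (P : E →ₗ[ℝ] F) : Prop :=
  Function.Surjective P ∧ ∀ x ∈ (LinearMap.ker P)ᗮ, ‖P x‖ = ‖x‖

namespace Stmt2Aux

variable {n m : ℕ}

variable (n m) in
abbrev X := EuclideanSpace ℝ (Fin n)
variable (n m) in
abbrev Y := EuclideanSpace ℝ (Fin m)

/-- Lower density of a finite measure on `ℝᵐ` w.r.t. `δ^m` is a.e. positive. -/
lemma lowdens (η : Measure (Y m)) [IsFiniteMeasure η] :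
    ∀ᵐ u ∂η, ∃ c : ℝ, 0 < c ∧ ∀ᶠ δ in 𝓝[>] (0:ℝ),
      ENNReal.ofReal (c * δ ^ m) ≤ η (closedBall u δ) := by
  set Bad := {u : Y m | ¬ ∃ c : ℝ, 0 < c ∧ ∀ᶠ δ in 𝓝[>] (0:ℝ),
      ENNReal.ofReal (c * δ ^ m) ≤ η (closedBall u δ)} with hBadDef
  have hvol1pos : (0:ℝ≥0∞) < volume (ball (0 : Y m) 1) := measure_ball_pos _ _ one_pos
  have hvol1top : volume (ball (0 : Y m) 1) ≠ ∞ := measure_ball_lt_top.ne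
  have main : ∀ (R : ℕ) (ε : ℝ), 0 < ε → η (Bad ∩ ball (0 : Y m) R) ≤
      ENNReal.ofReal ε * volume (ball (0 : Y m) (R + 2)) := by
    intro R ε hε
    set v := Besicovitch.vitaliFamily η with hv
    set f : Y m → Set (Set (Y m)) := fun _ =>
      {a | η a ≤ ENNReal.ofReal ε * volume a ∧ a ⊆ ball (0 : Y m) (R + 2)} with hf
    have hfine : v.FineSubfamilyOn f (Bad ∩ ball (0 : Y m) R) := by
      refine v.fineSubfamilyOn_of_frequently f _ fun u hu => ?_
      set c := ε * (volume (ball (0 : Y m) 1)).toReal with hc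
      have hcpos : 0 < c := mul_pos hε (ENNReal.toReal_pos hvol1pos.ne' hvol1top)
      have hfreq : ∃ᶠ δ in 𝓝[>] (0:ℝ), η (closedBall u δ) < ENNReal.ofReal (c * δ ^ m) := by
        have h1 := hu.1
        rw [hBadDef, Set.mem_setOf_eq, not_exists] at h1
        have h2 := h1 c
        rw [not_and] at h2
        have h3 := h2 hcpos
        rw [Filter.not_eventually] at h3
        exact h3.mono fun δ hδ => not_le.1 hδ
      have hev : ∀ᶠ δ in 𝓝[>] (0:ℝ), δ ∈ Set.Ioo (0:ℝ) 1 :=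
        Ioo_mem_nhdsGT_of_mem (Set.mem_Ico.2 ⟨le_refl (0:ℝ), one_pos⟩)
      have hfreq2 : ∃ᶠ δ in 𝓝[>] (0:ℝ), closedBall u δ ∈ f u := by
        refine (hfreq.and_eventually hev).mono ?_
        rintro δ ⟨hlt, hδ0, hδ1⟩
        constructor
        · have hvol : volume (closedBall u δ) =
              ENNReal.ofReal (δ ^ m) * volume (ball (0 : Y m) 1) := by
            rw [Measure.addHaar_closedBall _ _ hδ0.le, finrank_euclideanSpace_fin]
          have : ENNReal.ofReal (c * δ ^ m) = ENNReal.ofReal ε * volume (closedBall u δ) := by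
            rw [hvol, hc, mul_assoc, ENNReal.ofReal_mul hε.le,
              mul_comm ((volume (ball (0 : Y m) 1)).toReal) (δ ^ m),
              ENNReal.ofReal_mul (by positivity : (0:ℝ) ≤ δ ^ m),
              ENNReal.ofReal_toReal hvol1top]
          calc η (closedBall u δ) ≤ ENNReal.ofReal (c * δ ^ m) := hlt.le
            _ = ENNReal.ofReal ε * volume (closedBall u δ) := this
        · intro y hy
          have h5 : dist y (0 : Y m) ≤ dist y u + dist u (0 : Y m) := dist_triangle _ _ _
          have h6 : dist u (0 : Y m) < R := by
            have := hu.2; rwa [mem_ball] at this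
          have h7 : dist y u ≤ δ := by rwa [mem_closedBall] at hy
          rw [mem_ball]
          have : dist y (0 : Y m) < δ + R := by
            calc dist y (0 : Y m) ≤ dist y u + dist u (0 : Y m) := h5
              _ < δ + R := by exact add_lt_add_of_le_of_lt h7 h6
          calc dist y (0 : Y m) < δ + R := this
            _ ≤ (R : ℝ) + 2 := by nlinarith [hδ1.le]
      exact (Besicovitch.tendsto_filterAt η u).frequently hfreq2
    calc η (Bad ∩ ball (0 : Y m) R) ≤ ∑' p : hfine.index, η (hfine.covering p) :=
        hfine.measure_le_tsum
      _ ≤ ∑' p : hfine.index, ENNReal.ofReal ε * volume (hfine.covering p) := by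
          refine ENNReal.tsum_le_tsum fun p => ?_
          exact (hfine.covering_mem p.2).1
      _ = ENNReal.ofReal ε * ∑' p : hfine.index, volume (hfine.covering p) :=
          ENNReal.tsum_mul_left
      _ = ENNReal.ofReal ε * volume (⋃ p ∈ hfine.index, hfine.covering p) := by
          rw [measure_biUnion hfine.index_countable hfine.covering_disjoint
            fun p hp => hfine.measurableSet_u hp]
      _ ≤ ENNReal.ofReal ε * volume (ball (0 : Y m) (R + 2)) := by
          gcongr
          refine Set.iUnion₂_subset fun p hp => ?_
          exact (hfine.covering_mem hp).2
  have hR : ∀ R : ℕ, η (Bad ∩ ball (0 : Y m) R) = 0 := by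
    intro R
    have hvtop : volume (ball (0 : Y m) ((R : ℝ) + 2)) ≠ ∞ := measure_ball_lt_top.ne
    have hlim : Tendsto (fun k : ℕ => ENNReal.ofReal (1 / (k + 1)) *
        volume (ball (0 : Y m) ((R : ℝ) + 2))) atTop (𝓝 0) := by
      have h1 : Tendsto (fun k : ℕ => ENNReal.ofReal (1 / (k + 1))) atTop (𝓝 0) := by
        have := ENNReal.tendsto_ofReal tendsto_one_div_add_atTop_nhds_zero_nat
        simpa using this
      simpa using ENNReal.Tendsto.mul_const h1 (Or.inr hvtop)
    refine le_antisymm (ge_of_tendsto' hlim fun k => main R (1 / (k + 1)) (by positivity))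
      zero_le
  have hcover : Bad ⊆ ⋃ R : ℕ, Bad ∩ ball (0 : Y m) R := by
    intro u hu
    obtain ⟨R, hR'⟩ := exists_nat_gt (dist u (0 : Y m))
    exact Set.mem_iUnion.2 ⟨R, hu, mem_ball.2 hR'⟩
  have hBad : η Bad = 0 :=
    le_antisymm ((measure_mono hcover).trans (measure_iUnion_null hR).le) zero_le
  rw [ae_iff]
  exact hBad

/-- Mass distribution principle. -/
lemma frost {t : ℝ} (ht : 0 < t) (σ : Measure (X n)) (S : Set (X n)) (hS : MeasurableSet S)
    (C : ℝ≥0∞) (hC : C ≠ ∞) (r0 : ℝ) (hr0 : 0 < r0)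
    (hb : ∀ x ∈ S, ∀ r : ℝ, 0 < r → r ≤ r0 → σ (closedBall x r) ≤ C * ENNReal.ofReal (r ^ t))
    (h0 : μH[t] S = 0) : σ S = 0 := by
  set C' := C + 1 with hC'def
  have hC'0 : C' ≠ 0 := by simp [hC'def]
  have hC'top : C' ≠ ∞ := by simp [hC'def, hC]
  have hmin : (0:ℝ) < min 1 r0 := lt_min one_pos hr0
  have hptwise : ∀ x ∈ S, σ (closedBall x 0) = 0 := by
    intro x hxS
    have hten : Tendsto (fun r : ℝ => C * ENNReal.ofReal (r ^ t)) (𝓝[>] 0) (𝓝 (C * 0)) := by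
      refine ENNReal.Tendsto.const_mul ?_ (Or.inr hC)
      have h1 : Tendsto (fun r : ℝ => r ^ t) (𝓝[>] 0) (𝓝 ((0:ℝ) ^ t)) := by
        refine Tendsto.mono_left ?_ nhdsWithin_le_nhds
        exact (Real.continuousAt_rpow_const 0 t (Or.inr ht.le)).tendsto
      rw [Real.zero_rpow ht.ne'] at h1
      simpa using ENNReal.tendsto_ofReal h1
    rw [mul_zero] at hten
    refine le_antisymm (ge_of_tendsto hten ?_) zero_le
    filter_upwards [Ioc_mem_nhdsGT_of_mem (Set.mem_Ico.2 ⟨le_refl (0:ℝ), hr0⟩)] with r hr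
    exact le_trans (measure_mono (closedBall_subset_closedBall (le_of_lt hr.1)))
      (hb x hxS r hr.1 hr.2)
  have key : C'⁻¹ • σ.restrict S ≤ μH[t] := by
    refine MeasureTheory.Measure.le_hausdorffMeasure t _ (ENNReal.ofReal (min 1 r0))
      (ENNReal.ofReal_pos.2 hmin) ?_
    intro s hs
    rcases Set.eq_empty_or_nonempty (s ∩ S) with hemp | ⟨x, hxs, hxS⟩
    · have : (σ.restrict S) s = 0 := by
        rw [Measure.restrict_apply' hS, hemp]; simp
      simp [Measure.smul_apply, this]
    · have hdiam_ne : EMetric.diam s ≠ ∞ := (hs.trans_lt ENNReal.ofReal_lt_top).ne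
      set d := (EMetric.diam s).toReal with hd
      have hd0 : 0 ≤ d := ENNReal.toReal_nonneg
      have hdr0 : d ≤ min 1 r0 := ENNReal.toReal_le_of_le_ofReal hmin.le hs
      have hsub : s ⊆ closedBall x d := by
        intro y hy
        rw [mem_closedBall, dist_edist]
        exact ENNReal.toReal_mono hdiam_ne (EMetric.edist_le_diam_of_mem hy hxs)
      have hσs : σ.restrict S s ≤ σ (closedBall x d) := by
        rw [Measure.restrict_apply' hS]
        exact measure_mono fun y hy => hsub hy.1
      rcases eq_or_lt_of_le hd0 with hd0' | hd0'
      · have : σ (closedBall x d) = 0 := by rw [← hd0']; exact hptwise x hxS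
        have h2 : (σ.restrict S) s = 0 := le_antisymm (this ▸ hσs) zero_le
        simp [Measure.smul_apply, h2]
      · have hball := hb x hxS d hd0' (hdr0.trans (min_le_right _ _))
        calc (C'⁻¹ • σ.restrict S) s = C'⁻¹ * σ.restrict S s := rfl
          _ ≤ C'⁻¹ * (C * ENNReal.ofReal (d ^ t)) :=
              mul_le_mul' le_rfl (hσs.trans hball)
          _ ≤ C'⁻¹ * (C' * ENNReal.ofReal (d ^ t)) := by
              gcongr
              exact le_self_add
          _ = ENNReal.ofReal (d ^ t) := by
              rw [← mul_assoc, ENNReal.inv_mul_cancel hC'0 hC'top, one_mul]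
          _ = EMetric.diam s ^ t := by
              rw [← ENNReal.ofReal_rpow_of_pos hd0', ENNReal.ofReal_toReal hdiam_ne]
  have hle : C'⁻¹ * σ S ≤ 0 := by
    have h1 := Measure.le_iff'.1 key S
    rw [Measure.smul_apply, Measure.restrict_apply' hS, Set.inter_self, h0] at h1
    exact h1
  rcases mul_eq_zero.1 (le_antisymm hle zero_le) with h | h
  · exact absurd h (ENNReal.inv_ne_zero.2 hC'top)
  · exact h

/-- Measurability of the tube measure. -/
lemma meas_T (μ : Measure (X n)) [SFinite μ] {E : Set (X n)} (hE : MeasurableSet E)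
    (Pc : X n →L[ℝ] Y m) (r δ : ℝ) :
    Measurable fun x => μ {y | y ∈ E ∩ closedBall x r ∧ ‖Pc (y - x)‖ ≤ δ} := by
  have hW : MeasurableSet {p : X n × X n | p.2 ∈ E ∧ dist p.2 p.1 ≤ r ∧ ‖Pc (p.2 - p.1)‖ ≤ δ} := by
    refine (hE.preimage measurable_snd).inter (MeasurableSet.inter ?_ ?_)
    · exact isClosed_le (continuous_snd.dist continuous_fst) continuous_const |>.measurableSet
    · exact isClosed_le ((Pc.continuous.comp (continuous_snd.sub continuous_fst)).norm)
        continuous_const |>.measurableSet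
  have hset : ∀ x : X n, {y | y ∈ E ∩ closedBall x r ∧ ‖Pc (y - x)‖ ≤ δ} =
      Prod.mk x ⁻¹' {p : X n × X n | p.2 ∈ E ∧ dist p.2 p.1 ≤ r ∧ ‖Pc (p.2 - p.1)‖ ≤ δ} := by
    intro x; ext y
    simp only [Set.mem_setOf_eq, Set.mem_preimage, Set.mem_inter_iff, mem_closedBall, and_assoc]
  simp only [hset]
  exact measurable_measure_prodMk_left hW

variable {t : ℝ} (Pc : X n →L[ℝ] Y m) (E : Set (X n)) (μ : Measure (X n))

/-- The set of points where the tube estimate holds at all scales up to `q` with constant `N`. -/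
def A (t : ℝ) (N : ℕ) (q : ℝ) (K : Set (X n)) : Set (X n) :=
  K ∩ ⋂ (r : ℚ), ⋂ (_ : 0 < (r:ℝ) ∧ (r:ℝ) ≤ q), ⋂ (k : ℕ), ⋃ (δ : ℚ),
    ⋃ (_ : 0 < (δ:ℝ) ∧ (δ:ℝ) < 1/(k+1)),
      {x | μ {y | y ∈ E ∩ closedBall x r ∧ ‖Pc (y - x)‖ ≤ (δ:ℝ)} ≤
        (N : ℝ≥0∞) * ENNReal.ofReal ((r:ℝ) ^ t * (δ:ℝ) ^ m)}

lemma mem_A {N : ℕ} {q : ℝ} {K : Set (X n)} {x : X n} :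
    x ∈ A Pc E μ t N q K ↔ x ∈ K ∧ ∀ r : ℚ, 0 < (r:ℝ) ∧ (r:ℝ) ≤ q → ∀ k : ℕ,
      ∃ δ : ℚ, (0 < (δ:ℝ) ∧ (δ:ℝ) < 1/(k+1)) ∧
        μ {y | y ∈ E ∩ closedBall x r ∧ ‖Pc (y - x)‖ ≤ (δ:ℝ)} ≤
          (N : ℝ≥0∞) * ENNReal.ofReal ((r:ℝ) ^ t * (δ:ℝ) ^ m) := by
  simp [A, Set.mem_iInter, Set.mem_iUnion]

lemma meas_A [SFinite μ] (hE : MeasurableSet E) {N : ℕ} {q : ℝ} {K : Set (X n)}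
    (hK : MeasurableSet K) : MeasurableSet (A Pc E μ t N q K) := by
  refine hK.inter (MeasurableSet.iInter fun r => MeasurableSet.iInter fun _ =>
    MeasurableSet.iInter fun k => MeasurableSet.iUnion fun δ => MeasurableSet.iUnion fun _ => ?_)
  exact measurableSet_le (meas_T μ hE Pc r δ) measurable_const

/-- Core lemma: the set `A` is `μ`-null. -/
lemma core (ht : 0 < t) (hE : MeasurableSet E)
    (hlevel : ∀ u : Y m, μH[t] (E ∩ (fun y => Pc y) ⁻¹' {u}) = 0)
    [IsFiniteMeasure μ] {K : Set (X n)} (hK : IsCompact K) (hKE : K ⊆ E)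
    (N : ℕ) (q : ℝ) (hq : 0 < q) :
    μ (A Pc E μ t N q K) = 0 := by
  by_contra hA0
  set Aset := A Pc E μ t N q K with hAdef
  have hAmeas : MeasurableSet Aset := meas_A Pc E μ hE hK.measurableSet
  have hAK : Aset ⊆ K := Set.inter_subset_left
  set ν := μ.restrict Aset with hνdef
  set φ : X n → Y m × X n := fun x => (Pc x, x) with hφdef
  have hφ : Measurable φ := (Pc.continuous.measurable).prodMk measurable_id
  set ρ : Measure (Y m × X n) := ν.map φ with hρdef
  haveI hρfin : IsFiniteMeasure ρ := by
    refine ⟨?_⟩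
    rw [hρdef, Measure.map_apply hφ MeasurableSet.univ]
    exact measure_lt_top _ _
  set η := ρ.fst with hηdef
  set κ := ρ.condKernel with hκdef
  have hdis : η ⊗ₘ κ = ρ := ρ.disintegrate κ
  have hηap : ∀ {s : Set (Y m)}, MeasurableSet s → η s = ν (Pc ⁻¹' s) := by
    intro s hs
    rw [hηdef, Measure.fst_apply hs, hρdef, Measure.map_apply hφ (measurable_fst hs)]
    rfl
  have hηuniv : η Set.univ = μ Aset := by
    rw [hηap MeasurableSet.univ, Set.preimage_univ, hνdef, Measure.restrict_apply MeasurableSet.univ,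
      Set.univ_inter]
  have hρprod : ∀ {s : Set (Y m)} {w : Set (X n)}, MeasurableSet s → MeasurableSet w →
      ρ (s ×ˢ w) = ∫⁻ u in s, κ u w ∂η := by
    intro s w hs hw
    rw [← hdis, Measure.compProd_apply_prod hs hw]
  have hρprod' : ∀ {s : Set (Y m)} {w : Set (X n)}, MeasurableSet s → MeasurableSet w →
      ρ (s ×ˢ w) = μ ({x | Pc x ∈ s ∧ x ∈ w} ∩ Aset) := by
    intro s w hs hw
    rw [hρdef, Measure.map_apply hφ (hs.prod hw), hνdef, Measure.restrict_apply' hAmeas]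
    rfl
  -- concentration of the conditional kernel on the fibers and on Aset
  set Gset : Set (Y m × X n) := {p | p.2 ∈ Aset ∧ Pc p.2 = p.1} with hGdef
  have hGmeas : MeasurableSet Gset := by
    refine (hAmeas.preimage measurable_snd).inter ?_
    exact (isClosed_eq (Pc.continuous.comp continuous_snd) continuous_fst).measurableSet
  have hρG : ρ Gsetᶜ = 0 := by
    rw [hρdef, Measure.map_apply hφ hGmeas.compl]
    have hpre : φ ⁻¹' Gsetᶜ = Asetᶜ := by
      ext x
      simp [hGdef, hφdef]
    rw [hpre, hνdef, Measure.restrict_apply hAmeas.compl]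
    simp
  have hG1 : ∀ᵐ u ∂η, κ u {x | ¬ (x ∈ Aset ∧ Pc x = u)} = 0 := by
    have h1 : (η ⊗ₘ κ) Gsetᶜ = 0 := by rw [hdis]; exact hρG
    rw [Measure.compProd_apply hGmeas.compl] at h1
    have h2 := (lintegral_eq_zero_iff
      (ProbabilityTheory.Kernel.measurable_kernel_prodMk_left hGmeas.compl)).1 h1
    refine h2.mono fun u hu => ?_
    have hset : {x : X n | ¬ (x ∈ Aset ∧ Pc x = u)} = Prod.mk u ⁻¹' Gsetᶜ := by
      ext x
      simp [hGdef]
    rw [hset]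
    exact hu
  obtain ⟨D, hDc, hDd⟩ := TopologicalSpace.exists_countable_dense (X n)
  have hG2 : ∀ᵐ u ∂η, ∀ x0 ∈ D, ∀ r1 : ℚ, Tendsto (fun δ : ℝ =>
      ρ (closedBall u δ ×ˢ closedBall x0 (r1:ℝ)) / η (closedBall u δ)) (𝓝[>] (0:ℝ))
      (𝓝 (κ u (closedBall x0 (r1:ℝ)))) := by
    rw [ae_ball_iff hDc]
    intro x0 _
    rw [ae_all_iff]
    intro r1
    set f := fun v => κ v (closedBall x0 (r1:ℝ)) with hfdef
    have hfmeas : Measurable f := ProbabilityTheory.Kernel.measurable_coe κ measurableSet_closedBall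
    have hfint : ∫⁻ v, f v ∂η ≠ ∞ := by
      have h3 : ∫⁻ v, f v ∂η = ρ (Set.univ ×ˢ closedBall x0 (r1:ℝ)) := by
        rw [hρprod MeasurableSet.univ measurableSet_closedBall, Measure.restrict_univ]
      rw [h3]
      exact (measure_lt_top ρ _).ne
    have hv := (Besicovitch.vitaliFamily η).ae_tendsto_lintegral_div' hfmeas hfint
    refine hv.mono fun u hu => ?_
    have hcomp := hu.comp (Besicovitch.tendsto_filterAt η u)
    refine hcomp.congr fun δ => ?_
    simp only [Function.comp_apply]
    rw [hρprod measurableSet_closedBall measurableSet_closedBall]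
  have hG3 := lowdens η
  haveI : (ae η).NeBot := by
    refine ae_neBot.2 fun h => hA0 ?_
    rw [← hηuniv, h]
    simp
  obtain ⟨u, hu1, hu2, hu3⟩ := ((hG1.and (hG2.and hG3)).exists :
    ∃ u, _ ∧ _ ∧ _)
  set σ := κ u with hσdef
  haveI : IsProbabilityMeasure σ := by
    rw [hσdef, hκdef]
    infer_instance
  set S := Aset ∩ (fun y => Pc y) ⁻¹' {u} with hSdef
  have hSmeas : MeasurableSet S :=
    hAmeas.inter ((isClosed_singleton.preimage Pc.continuous).measurableSet)
  have hσSc : σ Sᶜ = 0 := by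
    have : Sᶜ = {x | ¬ (x ∈ Aset ∧ Pc x = u)} := by
      ext x
      simp [hSdef]
    rw [this]
    exact hu1
  have hσS : σ S ≠ 0 := by
    intro h
    have h2 : (1 : ℝ≥0∞) ≤ σ S + σ Sᶜ := by
      rw [← measure_univ (μ := σ), ← Set.union_compl_self S]
      exact measure_union_le _ _
    rw [h, hσSc, add_zero] at h2
    simp at h2
  obtain ⟨c, hc0, hcev⟩ := hu3
  have hcO0 : ENNReal.ofReal c ≠ 0 := (ENNReal.ofReal_pos.2 hc0).ne'
  set C : ℝ≥0∞ := (N : ℝ≥0∞) * ENNReal.ofReal (4 ^ t) * (ENNReal.ofReal c)⁻¹ with hCdef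
  have hCtop : C ≠ ∞ := by
    rw [hCdef]
    refine ENNReal.mul_ne_top (ENNReal.mul_ne_top (by simp) ENNReal.ofReal_ne_top) ?_
    exact ENNReal.inv_ne_top.2 hcO0
  have hball : ∀ x ∈ S, ∀ r : ℝ, 0 < r → r ≤ q / 8 →
      σ (closedBall x r) ≤ C * ENNReal.ofReal (r ^ t) := by
    intro x hxS r hr0 hrq
    obtain ⟨x0, hx0D, hx0d⟩ := hDd.exists_dist_lt x (by positivity : (0:ℝ) < r / 2)
    obtain ⟨r1, hr1l, hr1u⟩ := exists_rat_btwn (show (3/2) * r < 2 * r by linarith)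
    obtain ⟨r2, hr2l, hr2u⟩ := exists_rat_btwn (show (5/2) * r < 4 * r by linarith)
    have hr2pos : 0 < (r2:ℝ) := lt_trans (by positivity) hr2l
    have hr2q : (r2:ℝ) ≤ q := by
      have h8 : (r2:ℝ) < 4 * r := hr2u
      linarith
    have hsub1 : closedBall x r ⊆ closedBall x0 (r1:ℝ) := by
      intro y hy
      rw [mem_closedBall] at hy ⊢
      have h5 := dist_triangle y x x0
      have h6 : dist x x0 < r / 2 := hx0d
      have := hr1l
      linarith
    have hsub2 : closedBall x0 (r1:ℝ) ⊆ closedBall x (r2:ℝ) := by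
      intro y hy
      rw [mem_closedBall] at hy ⊢
      have h5 := dist_triangle y x0 x
      have h6 : dist x0 x < r / 2 := by rw [dist_comm]; exact hx0d
      have := hr1u
      have := hr2l
      linarith
    have hT := hu2 x0 hx0D r1
    have hxA : x ∈ Aset := hxS.1
    have hxAA := (mem_A Pc E μ).1 (hAdef ▸ hxA)
    have hxfib : Pc x = u := by
      have h9 := hxS.2
      simpa using h9
    choose δk hδkpos hδkbd using fun k : ℕ => hxAA.2 r2 ⟨hr2pos, hr2q⟩ k
    have hδten : Tendsto (fun k => ((δk k : ℚ) : ℝ)) atTop (𝓝[>] (0:ℝ)) := by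
      rw [tendsto_nhdsWithin_iff]
      constructor
      · refine squeeze_zero (fun k => (hδkpos k).1.le) (fun k => (hδkpos k).2.le) ?_
        exact tendsto_one_div_add_atTop_nhds_zero_nat
      · exact Filter.Eventually.of_forall fun k => (hδkpos k).1
    have hcomp := hT.comp hδten
    have hbnd : ∀ᶠ k in atTop,
        ρ (closedBall u ((δk k : ℝ)) ×ˢ closedBall x0 (r1:ℝ)) / η (closedBall u ((δk k : ℝ)))
          ≤ (N : ℝ≥0∞) * ENNReal.ofReal ((r2:ℝ) ^ t) * (ENNReal.ofReal c)⁻¹ := by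
      filter_upwards [hδten.eventually hcev] with k hk
      have hδpos : (0:ℝ) < (δk k : ℝ) := (hδkpos k).1
      have hnum : ρ (closedBall u ((δk k : ℝ)) ×ˢ closedBall x0 (r1:ℝ)) ≤
          (N : ℝ≥0∞) * ENNReal.ofReal ((r2:ℝ) ^ t * ((δk k : ℝ)) ^ m) := by
        rw [hρprod' measurableSet_closedBall measurableSet_closedBall]
        refine le_trans (measure_mono ?_) (hδkbd k)
        rintro y ⟨⟨hy1, hy2⟩, hyA⟩
        refine ⟨⟨hKE (hAK hyA), hsub2 hy2⟩, ?_⟩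
        rw [map_sub, hxfib]
        have h10 := mem_closedBall.1 hy1
        rwa [dist_eq_norm] at h10
      refine le_trans (ENNReal.div_le_div hnum hk) ?_
      have heq : (N : ℝ≥0∞) * ENNReal.ofReal ((r2:ℝ) ^ t * ((δk k : ℝ)) ^ m) /
          ENNReal.ofReal (c * ((δk k : ℝ)) ^ m) =
          (N : ℝ≥0∞) * ENNReal.ofReal ((r2:ℝ) ^ t) * (ENNReal.ofReal c)⁻¹ := by
        rw [ENNReal.ofReal_mul (by positivity : (0:ℝ) ≤ (r2:ℝ) ^ t),
            ENNReal.ofReal_mul hc0.le, ← mul_assoc,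
            ENNReal.mul_div_mul_right _ _
              ((ENNReal.ofReal_pos.2 (by positivity)).ne') ENNReal.ofReal_ne_top,
            div_eq_mul_inv]
      rw [heq]
    have hlim : σ (closedBall x0 (r1:ℝ)) ≤
        (N : ℝ≥0∞) * ENNReal.ofReal ((r2:ℝ) ^ t) * (ENNReal.ofReal c)⁻¹ :=
      le_of_tendsto hcomp hbnd
    have hfinal : (N : ℝ≥0∞) * ENNReal.ofReal ((r2:ℝ) ^ t) * (ENNReal.ofReal c)⁻¹ ≤
        C * ENNReal.ofReal (r ^ t) := by
      rw [hCdef]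
      have h7 : ((r2:ℝ)) ^ t ≤ (4:ℝ) ^ t * r ^ t := by
        rw [← Real.mul_rpow (by norm_num) hr0.le]
        exact Real.rpow_le_rpow hr2pos.le hr2u.le ht.le
      calc (N : ℝ≥0∞) * ENNReal.ofReal ((r2:ℝ) ^ t) * (ENNReal.ofReal c)⁻¹
          ≤ (N : ℝ≥0∞) * ENNReal.ofReal ((4:ℝ) ^ t * r ^ t) * (ENNReal.ofReal c)⁻¹ := by
            gcongr
        _ = (N : ℝ≥0∞) * ENNReal.ofReal ((4:ℝ) ^ t) * (ENNReal.ofReal c)⁻¹ *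
              ENNReal.ofReal (r ^ t) := by
            rw [ENNReal.ofReal_mul (by positivity : (0:ℝ) ≤ (4:ℝ) ^ t)]
            ring
    exact le_trans (measure_mono hsub1) (le_trans hlim hfinal)
  have hμHS : μH[t] S = 0 := by
    refine measure_mono_null ?_ (hlevel u)
    rw [hSdef]
    exact Set.inter_subset_inter (fun y hy => hKE (hAK hy)) le_rfl
  exact hσS (frost ht σ S hSmeas C hCtop (q / 8) (by positivity) hball hμHS)

end Stmt2Aux

set_option maxHeartbeats 1000000 in
theorem stmt2 {n m : ℕ} (hm : 1 ≤ m) (hmn : m < n) {t : ℝ} (ht : 0 < t)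
    (P : EuclideanSpace ℝ (Fin n) →ₗ[ℝ] EuclideanSpace ℝ (Fin m)) (hP : IsOrthoProj P)
    (E : Set (EuclideanSpace ℝ (Fin n))) (hE : MeasurableSet E)
    (hlevel : ∀ u : EuclideanSpace ℝ (Fin m), μH[t] (E ∩ (fun y => P y) ⁻¹' {u}) = 0)
    (μ : Measure (EuclideanSpace ℝ (Fin n))) [IsFiniteMeasure μ] (hμ0 : μ ≠ 0)
    (hμsupp : ∃ K, IsCompact K ∧ K ⊆ E ∧ μ Kᶜ = 0) :
    ∀ᵐ x ∂μ,
      limsup (fun r : ℝ =>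
          liminf (fun δ : ℝ =>
              μ {y | y ∈ E ∩ closedBall x r ∧ ‖P (y - x)‖ ≤ δ} /
                ENNReal.ofReal (r ^ t * δ ^ m)) (𝓝[>] 0))
        (𝓝[>] 0) = ∞ := by
  classical
  obtain ⟨K, hK, hKE, hKc⟩ := hμsupp
  set Pc : EuclideanSpace ℝ (Fin n) →L[ℝ] EuclideanSpace ℝ (Fin m) :=
    LinearMap.toContinuousLinearMap P with hPcdef
  have hPcoe : ⇑Pc = ⇑P := LinearMap.coe_toContinuousLinearMap' P
  have hlevel' : ∀ u : EuclideanSpace ℝ (Fin m),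
      μH[t] (E ∩ (fun y => Pc y) ⁻¹' {u}) = 0 := by
    intro u
    rw [show (fun y => Pc y) = fun y => P y by rw [hPcoe]]
    exact hlevel u
  rw [ae_iff]
  set F := fun x : EuclideanSpace ℝ (Fin n) => fun r : ℝ =>
    liminf (fun δ : ℝ =>
      μ {y | y ∈ E ∩ closedBall x r ∧ ‖P (y - x)‖ ≤ δ} /
        ENNReal.ofReal (r ^ t * δ ^ m)) (𝓝[>] 0) with hFdef
  have hsub : {x | ¬ limsup (F x) (𝓝[>] 0) = ∞} ⊆
      Kᶜ ∪ ⋃ (N : ℕ), ⋃ (q : ℚ), ⋃ (_ : 0 < (q:ℝ)), Stmt2Aux.A Pc E μ t N q K := by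
    intro x hx
    rw [Set.mem_setOf_eq] at hx
    by_cases hxK : x ∈ K
    swap
    · exact Or.inl hxK
    right
    obtain ⟨N, hN⟩ := ENNReal.exists_nat_gt hx
    have hev : ∀ᶠ r in 𝓝[>] (0:ℝ), F x r < N := eventually_lt_of_limsup_lt hN
    obtain ⟨u, hu, hIoo⟩ := mem_nhdsGT_iff_exists_Ioo_subset.1 hev
    obtain ⟨q, hq0, hqu⟩ := exists_rat_btwn (show (0:ℝ) < u from hu)
    have hq0' : 0 < (q:ℝ) := by exact_mod_cast hq0
    refine Set.mem_iUnion.2 ⟨N * 2 ^ m, Set.mem_iUnion.2 ⟨q, Set.mem_iUnion.2 ⟨hq0', ?_⟩⟩⟩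
    rw [Stmt2Aux.mem_A]
    refine ⟨hxK, fun r ⟨hr0, hrq⟩ k => ?_⟩
    have hrIoo : (r:ℝ) ∈ Set.Ioo (0:ℝ) u := ⟨hr0, lt_of_le_of_lt hrq hqu⟩
    have hFr : F x r < N := hIoo hrIoo
    have hfreq := frequently_lt_of_liminf_lt (by isBoundedDefault) hFr
    have hev2 : ∀ᶠ δ in 𝓝[>] (0:ℝ), δ ∈ Set.Ioo (0:ℝ) (1 / (2 * (k + 1))) :=
      Ioo_mem_nhdsGT_of_mem (Set.mem_Ico.2 ⟨le_refl (0:ℝ), by positivity⟩)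
    obtain ⟨δ, hlt, hδ0, hδs⟩ := (hfreq.and_eventually hev2).exists
    have hrt : (0:ℝ) < (r:ℝ) ^ t := Real.rpow_pos_of_pos hr0 t
    have hδm : (0:ℝ) < δ ^ m := by positivity
    have hb0 : ENNReal.ofReal ((r:ℝ) ^ t * δ ^ m) ≠ 0 := by
      simp only [ne_eq, ENNReal.ofReal_eq_zero, not_le]; positivity
    have hbtop : ENNReal.ofReal ((r:ℝ) ^ t * δ ^ m) ≠ ∞ := ENNReal.ofReal_ne_top
    have hnum : μ {y | y ∈ E ∩ closedBall x r ∧ ‖P (y - x)‖ ≤ δ} <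
        (N : ℝ≥0∞) * ENNReal.ofReal ((r:ℝ) ^ t * δ ^ m) :=
      (ENNReal.div_lt_iff (Or.inl hb0) (Or.inl hbtop)).1 hlt
    obtain ⟨δ', hδ'l, hδ'u⟩ := exists_rat_btwn (half_lt_self hδ0)
    have hδ'0 : 0 < (δ':ℝ) := lt_trans (by positivity) hδ'l
    have hδ'small : (δ':ℝ) < 1 / (k + 1) := by
      have : (δ':ℝ) < 1 / (2 * (k + 1)) := lt_trans hδ'u hδs
      have h2 : (1:ℝ) / (2 * (k + 1)) ≤ 1 / (k + 1) := by
        rw [div_le_div_iff₀ (by positivity) (by positivity)]; nlinarith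
      linarith
    refine ⟨δ', ⟨hδ'0, hδ'small⟩, ?_⟩
    have hmono : μ {y | y ∈ E ∩ closedBall x r ∧ ‖Pc (y - x)‖ ≤ (δ':ℝ)} ≤
        μ {y | y ∈ E ∩ closedBall x r ∧ ‖P (y - x)‖ ≤ δ} := by
      refine measure_mono fun y hy => ?_
      rw [Set.mem_setOf_eq] at hy ⊢
      refine ⟨hy.1, ?_⟩
      rw [hPcoe] at hy
      exact hy.2.trans (le_of_lt hδ'u)
    have hδ2 : δ ^ m ≤ (2 * (δ':ℝ)) ^ m := by
      refine pow_le_pow_left₀ hδ0.le ?_ m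
      linarith
    have hchain : (N : ℝ≥0∞) * ENNReal.ofReal ((r:ℝ) ^ t * δ ^ m) ≤
        ((N * 2 ^ m : ℕ) : ℝ≥0∞) * ENNReal.ofReal ((r:ℝ) ^ t * (δ':ℝ) ^ m) := by
      have h1 : ENNReal.ofReal ((r:ℝ) ^ t * δ ^ m) ≤
          ENNReal.ofReal ((r:ℝ) ^ t * (2 * (δ':ℝ)) ^ m) := by
        exact ENNReal.ofReal_le_ofReal (mul_le_mul_of_nonneg_left hδ2 hrt.le)
      have h2 : ((r:ℝ) ^ t * (2 * (δ':ℝ)) ^ m) = 2 ^ m * ((r:ℝ) ^ t * (δ':ℝ) ^ m) := by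
        rw [mul_pow]; ring
      calc (N : ℝ≥0∞) * ENNReal.ofReal ((r:ℝ) ^ t * δ ^ m)
          ≤ (N : ℝ≥0∞) * ENNReal.ofReal ((r:ℝ) ^ t * (2 * (δ':ℝ)) ^ m) := by gcongr
        _ = ((N * 2 ^ m : ℕ) : ℝ≥0∞) * ENNReal.ofReal ((r:ℝ) ^ t * (δ':ℝ) ^ m) := by
            rw [h2, ENNReal.ofReal_mul (by positivity)]
            push_cast
            rw [ENNReal.ofReal_pow (by norm_num : (0:ℝ) ≤ 2)]
            push_cast
            norm_num [ENNReal.ofReal_ofNat]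
            ring
    exact hmono.trans (le_trans hnum.le hchain)
  refine measure_mono_null hsub (measure_union_null hKc ?_)
  refine measure_iUnion_null fun N => measure_iUnion_null fun q => measure_iUnion_null fun hq =>
    Stmt2Aux.core Pc E μ ht hE hlevel' hK hKE N q hq

end
end

section
/- Let t > 0, C > 0, r₀ > 0, let P : ℝⁿ → ℝᵐ be an orthogonal projection, let F ⊂ ℝⁿ be compact, and let μ be a finite Borel measure on ℝⁿ. Suppose that for every x ∈ F and every 0 < r < r₀, liminf_{δ→0} r^{-t} δ^{-m} μ({y ∈ F ∩ B(x,r) : |P(y − x)| ≤ δ}) < C. Then for every x₀ ∈ F, every 0 < r < r₀/2, and every δ > 0, μ({y ∈ F ∩ B(x₀,r) : |P(y − x₀)| ≤ δ}) ≤ (2r)^t C δ^m. -/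
open MeasureTheory Metric Filter
open scoped ENNReal Topology

noncomputable section

theorem stmt9 {n m : ℕ} (hm : 1 ≤ m) (hmn : m < n)
    {t C r₀ : ℝ} (ht : 0 < t) (hC : 0 < C) (hr₀ : 0 < r₀)
    (P : EuclideanSpace ℝ (Fin n) →ₗ[ℝ] EuclideanSpace ℝ (Fin m)) (hP : IsOrthoProj P)
    (F : Set (EuclideanSpace ℝ (Fin n))) (hF : IsCompact F)
    (μ : Measure (EuclideanSpace ℝ (Fin n))) [IsFiniteMeasure μ]
    (hliminf : ∀ x ∈ F, ∀ r : ℝ, 0 < r → r < r₀ →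
      liminf (fun δ : ℝ =>
          μ {y | y ∈ F ∩ closedBall x r ∧ ‖P (y - x)‖ ≤ δ} /
            ENNReal.ofReal (r ^ t * δ ^ m)) (𝓝[>] 0) < ENNReal.ofReal C) :
    ∀ x₀ ∈ F, ∀ r : ℝ, 0 < r → r < r₀ / 2 → ∀ δ : ℝ, 0 < δ →
      μ {y | y ∈ F ∩ closedBall x₀ r ∧ ‖P (y - x₀)‖ ≤ δ} ≤
        ENNReal.ofReal ((2 * r) ^ t * C * δ ^ m) := by
  intro x₀ hx₀ r hr hrr₀ δ hδ
  classical
  have hPc : Continuous P := P.continuous_of_finiteDimensional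
  set π : EuclideanSpace ℝ (Fin n) → EuclideanSpace ℝ (Fin m) :=
    fun y => P (y - x₀) with hπdef
  have hπ : Continuous π := hPc.comp (continuous_id.sub continuous_const)
  set K : Set (EuclideanSpace ℝ (Fin n)) := F ∩ closedBall x₀ r with hK
  have hKmeas : MeasurableSet K :=
    hF.isClosed.measurableSet.inter measurableSet_closedBall
  set ν : Measure (EuclideanSpace ℝ (Fin m)) := (μ.restrict K).map π with hν
  have hν_apply : ∀ s : Set (EuclideanSpace ℝ (Fin m)), MeasurableSet s →
      ν s = μ (π ⁻¹' s ∩ K) := by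
    intro s hs
    rw [hν, Measure.map_apply hπ.measurable hs,
      Measure.restrict_apply (hπ.measurable hs)]
  haveI : IsFiniteMeasure ν := by
    constructor
    rw [hν_apply Set.univ MeasurableSet.univ]
    exact lt_of_le_of_lt (measure_mono (Set.subset_univ _)) (measure_lt_top μ _)
  set C' : ℝ := C * (2 * r) ^ t with hC'
  have h2r : (0:ℝ) < 2 * r := by linarith
  have h2rt : (0:ℝ) < (2 * r) ^ t := Real.rpow_pos_of_pos h2r t
  have hC'pos : 0 < C' := mul_pos hC h2rt
  -- key density estimate
  have key : ∀ z ∈ π '' K, ∀ ε : ℝ, 0 < ε → ∃ ρ : ℝ, 0 < ρ ∧ ρ < ε ∧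
      ν (closedBall z ρ) ≤ ENNReal.ofReal (C' * ρ ^ m) := by
    rintro z ⟨x, hxK, rfl⟩ ε hε
    have hlim := hliminf x hxK.1 (2 * r) h2r (by linarith)
    have hfreq : ∃ᶠ ρ in 𝓝[>] (0:ℝ),
        μ {y | y ∈ F ∩ closedBall x (2 * r) ∧ ‖P (y - x)‖ ≤ ρ} /
          ENNReal.ofReal ((2 * r) ^ t * ρ ^ m) < ENNReal.ofReal C :=
      frequently_lt_of_liminf_lt (by isBoundedDefault) hlim
    have hev : ∀ᶠ ρ in 𝓝[>] (0:ℝ), ρ ∈ Set.Ioo 0 ε :=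
      Ioo_mem_nhdsGT_of_mem ⟨le_refl _, hε⟩
    obtain ⟨ρ, hρlt, hρmem⟩ := (hfreq.and_eventually hev).exists
    refine ⟨ρ, hρmem.1, hρmem.2, ?_⟩
    have hden : ENNReal.ofReal ((2 * r) ^ t * ρ ^ m) ≠ 0 := by
      simp only [ne_eq, ENNReal.ofReal_eq_zero, not_le]
      exact mul_pos h2rt (pow_pos hρmem.1 m)
    have hμlt : μ {y | y ∈ F ∩ closedBall x (2 * r) ∧ ‖P (y - x)‖ ≤ ρ} <
        ENNReal.ofReal C * ENNReal.ofReal ((2 * r) ^ t * ρ ^ m) :=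
      (ENNReal.div_lt_iff (Or.inl hden) (Or.inl ENNReal.ofReal_ne_top)).1 hρlt
    have hsub : π ⁻¹' closedBall (π x) ρ ∩ K ⊆
        {y | y ∈ F ∩ closedBall x (2 * r) ∧ ‖P (y - x)‖ ≤ ρ} := by
      rintro y ⟨hy1, hy2, hy3⟩
      refine ⟨⟨hy2, ?_⟩, ?_⟩
      · rw [mem_closedBall] at hy3 ⊢
        have hx2 : dist x x₀ ≤ r := hxK.2
        calc dist y x ≤ dist y x₀ + dist x₀ x := dist_triangle _ _ _
          _ ≤ r + r := add_le_add hy3 (by rwa [dist_comm])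
          _ = 2 * r := by ring
      · have : P (y - x) = π y - π x := by
          simp only [hπdef, ← map_sub]
          congr 1
          abel
        rw [this, ← dist_eq_norm]
        exact hy1
    calc ν (closedBall (π x) ρ) = μ (π ⁻¹' closedBall (π x) ρ ∩ K) :=
          hν_apply _ measurableSet_closedBall
      _ ≤ μ {y | y ∈ F ∩ closedBall x (2 * r) ∧ ‖P (y - x)‖ ≤ ρ} := measure_mono hsub
      _ ≤ ENNReal.ofReal C * ENNReal.ofReal ((2 * r) ^ t * ρ ^ m) := hμlt.le
      _ = ENNReal.ofReal (C' * ρ ^ m) := by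
          rw [← ENNReal.ofReal_mul hC.le, hC']
          ring_nf
  -- identify the measure of the target set with ν of a ball
  have hEν : μ {y | y ∈ F ∩ closedBall x₀ r ∧ ‖P (y - x₀)‖ ≤ δ} =
      ν (closedBall 0 δ) := by
    rw [hν_apply _ measurableSet_closedBall]
    congr 1
    ext y
    simp only [Set.mem_inter_iff, Set.mem_preimage, mem_closedBall, Set.mem_setOf_eq,
      dist_eq_norm, sub_zero, hK, hπdef]
    tauto
  -- main estimate with ε-fattening
  set V : ℝ≥0∞ := volume (ball (0 : EuclideanSpace ℝ (Fin m)) 1) with hV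
  have hV0 : V ≠ 0 := (measure_ball_pos _ _ one_pos).ne'
  have hVtop : V ≠ ∞ := measure_ball_lt_top.ne
  have main : ∀ ε : ℝ, 0 < ε →
      ν (closedBall 0 δ) ≤ ENNReal.ofReal C' * ENNReal.ofReal ((δ + ε) ^ m) := by
    intro ε hε
    set S0 : Set (EuclideanSpace ℝ (Fin m)) := closedBall 0 δ ∩ π '' K with hS0
    set f : EuclideanSpace ℝ (Fin m) → Set ℝ :=
      fun z => {ρ : ℝ | ν (closedBall z ρ) ≤ ENNReal.ofReal (C' * ρ ^ m)} with hf
    have hff : ∀ z ∈ S0, ∀ ε' > (0:ℝ), (f z ∩ Set.Ioo 0 ε').Nonempty := by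
      intro z hz ε' hε'
      obtain ⟨ρ, hρ0, hρε, hρν⟩ := key z hz.2 ε' hε'
      exact ⟨ρ, hρν, hρ0, hρε⟩
    obtain ⟨tt, rad, t_count, t_sub, t_prop, t_null, t_disj⟩ :=
      Besicovitch.exists_disjoint_closedBall_covering_ae ν f S0 hff (fun _ => ε)
        (fun _ _ => hε)
    have hcb_sub : ν (closedBall 0 δ) ≤ ν S0 := by
      have hS0meas : MeasurableSet S0 :=
        measurableSet_closedBall.inter
          ((hF.inter_right isClosed_closedBall).image hπ).isClosed.measurableSet
      rw [hν_apply _ measurableSet_closedBall, hν_apply _ hS0meas]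
      apply measure_mono
      rintro y ⟨hy1, hy2⟩
      exact ⟨⟨hy1, Set.mem_image_of_mem π hy2⟩, hy2⟩
    have hcover : ν S0 ≤ ∑' x : tt, ν (closedBall x (rad x)) := by
      calc ν S0 ≤ ν (S0 ∩ ⋃ x ∈ tt, closedBall x (rad x)) +
            ν (S0 \ ⋃ x ∈ tt, closedBall x (rad x)) :=
            measure_le_inter_add_diff ν S0 _
        _ = ν (S0 ∩ ⋃ x ∈ tt, closedBall x (rad x)) := by rw [t_null, add_zero]
        _ ≤ ν (⋃ x ∈ tt, closedBall x (rad x)) := measure_mono Set.inter_subset_right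
        _ ≤ ∑' x : tt, ν (closedBall x (rad x)) := measure_biUnion_le ν t_count _
    have hsum_rad : ∑' x : tt, ENNReal.ofReal (rad x ^ m) ≤
        ENNReal.ofReal ((δ + ε) ^ m) := by
      have hvol : ∀ x ∈ tt, volume (closedBall x (rad x)) =
          ENNReal.ofReal (rad x ^ m) * V := by
        intro x hx
        rw [Measure.addHaar_closedBall _ _ (t_prop x hx).2.1.le,
          finrank_euclideanSpace_fin]
      have hdisj_vol : ∑' x : tt, volume (closedBall (x:EuclideanSpace ℝ (Fin m)) (rad x)) =
          volume (⋃ x ∈ tt, closedBall x (rad x)) :=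
        (measure_biUnion t_count t_disj fun x _ => measurableSet_closedBall).symm
      have hsub_big : (⋃ x ∈ tt, closedBall x (rad x)) ⊆ closedBall 0 (δ + ε) := by
        intro z hz
        simp only [Set.mem_iUnion] at hz
        obtain ⟨x, hx, hzx⟩ := hz
        rw [mem_closedBall] at hzx ⊢
        have hx0 : dist (x:EuclideanSpace ℝ (Fin m)) 0 ≤ δ := (t_sub hx).1
        calc dist z 0 ≤ dist z x + dist x 0 := dist_triangle _ _ _
          _ ≤ rad x + δ := add_le_add hzx hx0
          _ ≤ ε + δ := add_le_add (t_prop x hx).2.2.le (le_refl _)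
          _ = δ + ε := by ring
      have hbig : volume (closedBall (0:EuclideanSpace ℝ (Fin m)) (δ + ε)) =
          ENNReal.ofReal ((δ + ε) ^ m) * V := by
        rw [Measure.addHaar_closedBall _ _ (by linarith), finrank_euclideanSpace_fin]
      have : (∑' x : tt, ENNReal.ofReal (rad x ^ m)) * V ≤
          ENNReal.ofReal ((δ + ε) ^ m) * V := by
        rw [← ENNReal.tsum_mul_right]
        calc ∑' x : tt, ENNReal.ofReal (rad x ^ m) * V
            = ∑' x : tt, volume (closedBall (x:EuclideanSpace ℝ (Fin m)) (rad x)) := by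
              refine tsum_congr fun x => ?_
              rw [hvol x x.2]
          _ = volume (⋃ x ∈ tt, closedBall x (rad x)) := hdisj_vol
          _ ≤ volume (closedBall 0 (δ + ε)) := measure_mono hsub_big
          _ = ENNReal.ofReal ((δ + ε) ^ m) * V := hbig
      exact (ENNReal.mul_le_mul_iff_left hV0 hVtop).1 this
    calc ν (closedBall 0 δ) ≤ ν S0 := hcb_sub
      _ ≤ ∑' x : tt, ν (closedBall x (rad x)) := hcover
      _ ≤ ∑' x : tt, ENNReal.ofReal (C' * rad x ^ m) :=
          ENNReal.tsum_le_tsum fun x => (t_prop x x.2).1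
      _ = ENNReal.ofReal C' * ∑' x : tt, ENNReal.ofReal (rad x ^ m) := by
          rw [← ENNReal.tsum_mul_left]
          exact tsum_congr fun x => ENNReal.ofReal_mul hC'pos.le
      _ ≤ ENNReal.ofReal C' * ENNReal.ofReal ((δ + ε) ^ m) := by
          exact mul_le_mul_right hsum_rad _
  -- pass to the limit ε → 0⁺
  have hlim : Tendsto (fun ε : ℝ => ENNReal.ofReal C' * ENNReal.ofReal ((δ + ε) ^ m))
      (𝓝[>] (0:ℝ)) (𝓝 (ENNReal.ofReal C' * ENNReal.ofReal (δ ^ m))) := by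
    have hc : Continuous fun ε : ℝ => ENNReal.ofReal ((δ + ε) ^ m) :=
      ENNReal.continuous_ofReal.comp ((continuous_const.add continuous_id).pow m)
    have h1 := (hc.tendsto 0).mono_left (nhdsWithin_le_nhds (s := Set.Ioi (0:ℝ)))
    simp only [add_zero] at h1
    exact ENNReal.Tendsto.const_mul h1 (Or.inr ENNReal.ofReal_ne_top)
  have hfinal : ν (closedBall 0 δ) ≤ ENNReal.ofReal C' * ENNReal.ofReal (δ ^ m) := by
    refine ge_of_tendsto hlim ?_
    exact eventually_nhdsWithin_of_forall fun ε hε => main ε hε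
  rw [hEν]
  calc ν (closedBall 0 δ) ≤ ENNReal.ofReal C' * ENNReal.ofReal (δ ^ m) := hfinal
    _ = ENNReal.ofReal ((2 * r) ^ t * C * δ ^ m) := by
        rw [← ENNReal.ofReal_mul hC'pos.le, hC']
        ring_nf

end
end

section
/- Let m ≥ 1 and let ν be a nonzero finite Borel measure on ℝᵐ with compact support. Then there exist a point u ∈ ℝᵐ and constants c > 0 and δ₀ > 0 such that ν(B(u,δ)) ≥ c δ^m ν(ℝᵐ) for all 0 < δ < δ₀. In particular, if P : ℝⁿ → ℝᵐ is an orthogonal projection and μ is a nonzero finite Borel measure with compact support F ⊂ ℝⁿ, then there exist u ∈ ℝᵐ, c > 0 and δ₀ > 0 such that μ(F ∩ P⁻¹(B(u,δ))) ≥ c δ^m μ(F) for all 0 < δ < δ₀. -/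
open MeasureTheory Metric Filter
open scoped ENNReal Topology

noncomputable section


theorem key {m : ℕ} (hm : 1 ≤ m) (ν : Measure (EuclideanSpace ℝ (Fin m)))
    [IsFiniteMeasure ν] (hν : ν ≠ 0) :
    ∃ (u : EuclideanSpace ℝ (Fin m)) (c δ₀ : ℝ), 0 < c ∧ 0 < δ₀ ∧
      ∀ δ : ℝ, 0 < δ → δ < δ₀ →
        ENNReal.ofReal (c * δ ^ m) * ν Set.univ ≤ ν (closedBall u δ) := by
  haveI : Nontrivial (EuclideanSpace ℝ (Fin m)) := by
    apply Module.nontrivial_of_finrank_pos (R := ℝ)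
    rw [finrank_euclideanSpace_fin]; exact hm
  have h1 := Besicovitch.ae_tendsto_rnDeriv (volume : Measure (EuclideanSpace ℝ (Fin m))) ν
  have h2 := Measure.rnDeriv_lt_top (volume : Measure (EuclideanSpace ℝ (Fin m))) ν
  haveI : (ae ν).NeBot := ae_neBot.mpr hν
  obtain ⟨x, hx1, hx2⟩ := (h1.and h2).exists
  set D := (volume : Measure (EuclideanSpace ℝ (Fin m))).rnDeriv ν x with hD
  set M := D + 1 with hM
  have hMlt : D < M := ENNReal.lt_add_right hx2.ne one_ne_zero
  have hev : ∀ᶠ r in 𝓝[>] (0:ℝ),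
      volume (closedBall x r) / ν (closedBall x r) < M :=
    hx1.eventually_lt_const hMlt
  obtain ⟨a, δ₀, ⟨ha, hδ₀pos⟩, hsub⟩ := (eventually_nhdsWithin_iff.mp hev).exists_Ioo_subset
  have hM0 : M ≠ 0 := by simp [hM]
  have hMtop : M ≠ ∞ := by simp [hM, hx2.ne]
  set V := volume (ball (0 : EuclideanSpace ℝ (Fin m)) 1) with hV
  have hV0 : 0 < V := measure_ball_pos _ _ one_pos
  have hVtop : V ≠ ∞ := measure_ball_lt_top.ne
  set T := ν Set.univ with hT
  have hT0 : 0 < T := Measure.measure_univ_pos.mpr hν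
  have hTtop : T ≠ ∞ := measure_ne_top ν _
  refine ⟨x, V.toReal / (M.toReal * T.toReal), δ₀, ?_, hδ₀pos, ?_⟩
  · apply div_pos (ENNReal.toReal_pos hV0.ne' hVtop)
    exact mul_pos (ENNReal.toReal_pos hM0 hMtop) (ENNReal.toReal_pos hT0.ne' hTtop)
  intro δ hδ hδlt
  have hratio : volume (closedBall x δ) / ν (closedBall x δ) < M :=
    hsub ⟨ha.trans hδ, hδlt⟩ hδ
  have hvol : volume (closedBall x δ) = ENNReal.ofReal (δ ^ m) * V := by
    rw [Measure.addHaar_closedBall _ x hδ.le, finrank_euclideanSpace_fin]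
  have hlt : ENNReal.ofReal (δ ^ m) * V < M * ν (closedBall x δ) := by
    rw [← hvol]
    exact (ENNReal.div_lt_iff (Or.inr (measure_closedBall_pos volume x hδ).ne')
      (Or.inl (measure_ne_top ν _))).mp hratio
  have hkey : ENNReal.ofReal (V.toReal / (M.toReal * T.toReal) * δ ^ m) * T
      = (ENNReal.ofReal (δ ^ m) * V) / M := by
    have hTr : 0 < T.toReal := ENNReal.toReal_pos hT0.ne' hTtop
    have hMr : 0 < M.toReal := ENNReal.toReal_pos hM0 hMtop
    conv_lhs => rw [← ENNReal.ofReal_toReal hTtop]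
    conv_rhs => rw [← ENNReal.ofReal_toReal hVtop, ← ENNReal.ofReal_toReal hMtop]
    rw [← ENNReal.ofReal_mul (by positivity), ← ENNReal.ofReal_mul (by positivity),
      ← ENNReal.ofReal_div_of_pos hMr]
    congr 1
    field_simp
    simp only [ENNReal.toReal_ofReal hTr.le]
    field_simp
  rw [hkey]
  calc (ENNReal.ofReal (δ ^ m) * V) / M ≤ (M * ν (closedBall x δ)) / M :=
        ENNReal.div_le_div_right hlt.le M
    _ = ν (closedBall x δ) := by
        rw [mul_comm, mul_div_assoc, ENNReal.div_self hM0 hMtop, mul_one]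



theorem stmt10 {n m : ℕ} (hm : 1 ≤ m) (hmn : m < n) :
    (∀ ν : Measure (EuclideanSpace ℝ (Fin m)), IsFiniteMeasure ν → ν ≠ 0 →
      (∃ K, IsCompact K ∧ ν Kᶜ = 0) →
      ∃ (u : EuclideanSpace ℝ (Fin m)) (c δ₀ : ℝ), 0 < c ∧ 0 < δ₀ ∧
        ∀ δ : ℝ, 0 < δ → δ < δ₀ →
          ENNReal.ofReal (c * δ ^ m) * ν Set.univ ≤ ν (closedBall u δ)) ∧
    (∀ P : EuclideanSpace ℝ (Fin n) →ₗ[ℝ] EuclideanSpace ℝ (Fin m), IsOrthoProj P →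
      ∀ (μ : Measure (EuclideanSpace ℝ (Fin n))) (F : Set (EuclideanSpace ℝ (Fin n))),
        IsFiniteMeasure μ → μ ≠ 0 → IsCompact F → μ Fᶜ = 0 →
        ∃ (u : EuclideanSpace ℝ (Fin m)) (c δ₀ : ℝ), 0 < c ∧ 0 < δ₀ ∧
          ∀ δ : ℝ, 0 < δ → δ < δ₀ →
            ENNReal.ofReal (c * δ ^ m) * μ F ≤
              μ (F ∩ (fun y => P y) ⁻¹' closedBall u δ)) := by
  constructor
  · intro ν hfin hν _
    exact key hm ν hν
  · intro P _ μ F hfin hμ hF hFc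
    have hPc : Continuous P := P.continuous_of_finiteDimensional
    have hPm : Measurable P := hPc.measurable
    set ν := μ.map P with hνdef
    haveI : IsFiniteMeasure ν := Measure.isFiniteMeasure_map μ P
    have hνuniv : ν Set.univ = μ Set.univ := by
      rw [hνdef, Measure.map_apply hPm MeasurableSet.univ, Set.preimage_univ]
    have hν : ν ≠ 0 := by
      intro h
      apply hμ
      rw [← Measure.measure_univ_eq_zero, ← hνuniv, h]
      simp
    obtain ⟨u, c, δ₀, hc, hδ₀, hall⟩ := key hm ν hν
    refine ⟨u, c, δ₀, hc, hδ₀, fun δ hδ hδlt => ?_⟩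
    have hFμ : μ F = μ Set.univ := by
      have := measure_add_measure_compl (μ := μ) hF.isClosed.measurableSet
      rw [hFc, add_zero] at this
      exact this
    have hν_ball : ν (closedBall u δ) = μ (P ⁻¹' closedBall u δ) :=
      Measure.map_apply hPm measurableSet_closedBall
    have hsplit : μ (P ⁻¹' closedBall u δ) ≤ μ (F ∩ P ⁻¹' closedBall u δ) := by
      calc μ (P ⁻¹' closedBall u δ) ≤ μ ((F ∩ P ⁻¹' closedBall u δ) ∪ Fᶜ) := by
            apply measure_mono
            intro x hx
            by_cases hxF : x ∈ F
            · exact Or.inl ⟨hxF, hx⟩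
            · exact Or.inr hxF
        _ ≤ μ (F ∩ P ⁻¹' closedBall u δ) + μ Fᶜ := measure_union_le _ _
        _ = μ (F ∩ P ⁻¹' closedBall u δ) := by rw [hFc, add_zero]
    calc ENNReal.ofReal (c * δ ^ m) * μ F = ENNReal.ofReal (c * δ ^ m) * ν Set.univ := by
          rw [hFμ, hνuniv]
      _ ≤ ν (closedBall u δ) := hall δ hδ hδlt
      _ = μ (P ⁻¹' closedBall u δ) := hν_ball
      _ ≤ μ (F ∩ (fun y => P y) ⁻¹' closedBall u δ) := hsplit

end
end
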